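/- Let 1 ≤ p₁ ≤ p₂ < ∞ and let φ₁, φ₂ be positive functions on the odd naturals. Suppose there exists C > 0 such that φ₂(2N+1) ≤ C φ₁(2N+1) for every N ∈ ℕ. Then for every sequence x, ‖x‖_{ℓ^{p₁}_{φ₁}} ≤ C ‖x‖_{ℓ^{p₂}_{φ₂}}; in particular ℓ^{p₂}_{φ₂} ⊆ ℓ^{p₁}_{φ₁}. -/

import Mathlib

open scoped ENNReal NNReal BigOperators

/-- The discrete "ball" `S_{m,N} = {m-N, …, m+N}` as a finite set of integers. -/
noncomputable def S (m : ℤ) (N : ℕ) : Finset ℤ := Finset.Icc (m - N) (m + N)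

/-- The generalized discrete Morrey norm `‖x‖_{ℓ^p_φ}`. -/
noncomputable def gMorreyNorm (p : ℝ) (φ : ℕ → ℝ) (x : ℤ → ℂ) : ℝ≥0∞ :=
  ⨆ (m : ℤ) (N : ℕ),
    (ENNReal.ofReal (φ (2 * N + 1)))⁻¹ *
      ((2 * (N : ℝ≥0∞) + 1)⁻¹ * ∑ k ∈ S m N, (‖x k‖₊ : ℝ≥0∞) ^ p) ^ (1 / p)

theorem stmt12 (p₁ p₂ : ℝ) (hp₁ : 1 ≤ p₁) (hp : p₁ ≤ p₂)
    (φ₁ φ₂ : ℕ → ℝ)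
    (hφ₁ : ∀ N : ℕ, 0 < φ₁ (2 * N + 1)) (hφ₂ : ∀ N : ℕ, 0 < φ₂ (2 * N + 1))
    (C : ℝ) (hC : 0 < C) (h : ∀ N : ℕ, φ₂ (2 * N + 1) ≤ C * φ₁ (2 * N + 1)) :
    ∀ x : ℤ → ℂ, gMorreyNorm p₁ φ₁ x ≤ ENNReal.ofReal C * gMorreyNorm p₂ φ₂ x := by
  intro x
  have hp₁0 : (0:ℝ) < p₁ := lt_of_lt_of_le one_pos hp₁
  have hp₂0 : (0:ℝ) < p₂ := lt_of_lt_of_le hp₁0 hp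
  refine iSup_le fun m => iSup_le fun N => ?_
  set n : ℝ≥0∞ := 2 * (N:ℝ≥0∞) + 1 with hn
  have hn0 : n ≠ 0 := by simp [hn]
  have hnt : n ≠ ∞ := by finiteness
  have hcard : (S m N).card = 2 * N + 1 := by
    rw [S, Int.card_Icc]
    omega
  have hw : ∑ _k ∈ S m N, n⁻¹ = 1 := by
    rw [Finset.sum_const, hcard, nsmul_eq_mul]
    have : ((2 * N + 1 : ℕ) : ℝ≥0∞) = n := by push_cast [hn]; ring
    rw [this, ENNReal.mul_inv_cancel hn0 hnt]
  have key : (n⁻¹ * ∑ k ∈ S m N, (‖x k‖₊:ℝ≥0∞) ^ p₁) ^ (1/p₁)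
      ≤ (n⁻¹ * ∑ k ∈ S m N, (‖x k‖₊:ℝ≥0∞) ^ p₂) ^ (1/p₂) := by
    have h1 := ENNReal.rpow_arith_mean_le_arith_mean_rpow (s := S m N)
      (w := fun _ => n⁻¹) (z := fun k => (‖x k‖₊:ℝ≥0∞) ^ p₁) hw (p := p₂/p₁)
      ((one_le_div hp₁0).2 hp)
    have hz : ∀ k : ℤ, ((‖x k‖₊:ℝ≥0∞) ^ p₁) ^ (p₂/p₁) = (‖x k‖₊:ℝ≥0∞) ^ p₂ := by
      intro k
      rw [← ENNReal.rpow_mul]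
      congr 1
      field_simp
    simp only [hz, ← Finset.mul_sum] at h1
    calc (n⁻¹ * ∑ k ∈ S m N, (‖x k‖₊:ℝ≥0∞) ^ p₁) ^ (1/p₁)
        = ((n⁻¹ * ∑ k ∈ S m N, (‖x k‖₊:ℝ≥0∞) ^ p₁) ^ (p₂/p₁)) ^ (1/p₂) := by
          rw [← ENNReal.rpow_mul]
          congr 1
          field_simp
      _ ≤ (n⁻¹ * ∑ k ∈ S m N, (‖x k‖₊:ℝ≥0∞) ^ p₂) ^ (1/p₂) :=
          ENNReal.rpow_le_rpow h1 (by positivity)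
  have hφ : (ENNReal.ofReal (φ₁ (2*N+1)))⁻¹
      ≤ ENNReal.ofReal C * (ENNReal.ofReal (φ₂ (2*N+1)))⁻¹ := by
    rw [← ENNReal.ofReal_inv_of_pos (hφ₁ N), ← ENNReal.ofReal_inv_of_pos (hφ₂ N),
      ← ENNReal.ofReal_mul hC.le]
    apply ENNReal.ofReal_le_ofReal
    rw [← one_div, ← one_div, mul_one_div, div_le_div_iff₀ (hφ₁ N) (hφ₂ N)]
    linarith [h N]
  calc (ENNReal.ofReal (φ₁ (2*N+1)))⁻¹ *
        (n⁻¹ * ∑ k ∈ S m N, (‖x k‖₊:ℝ≥0∞) ^ p₁) ^ (1/p₁)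
      ≤ (ENNReal.ofReal C * (ENNReal.ofReal (φ₂ (2*N+1)))⁻¹) *
        (n⁻¹ * ∑ k ∈ S m N, (‖x k‖₊:ℝ≥0∞) ^ p₂) ^ (1/p₂) :=
        mul_le_mul' hφ key
    _ = ENNReal.ofReal C * ((ENNReal.ofReal (φ₂ (2*N+1)))⁻¹ *
        (n⁻¹ * ∑ k ∈ S m N, (‖x k‖₊:ℝ≥0∞) ^ p₂) ^ (1/p₂)) := by ring
    _ ≤ ENNReal.ofReal C * gMorreyNorm p₂ φ₂ x := by
        gcongr
        rw [gMorreyNorm]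
        exact le_iSup₂_of_le m N (by rw [hn])
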